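/- Let l ∈ ℕ, let h : ℝ² → ℝ be C^l, and let A : ℝ² → ℝ² be a linear map. Then for every x ∈ ℝ²: W_l(h ∘ A)(x) = (det A)^l · W_l(h)(A x). In particular K₂(h ∘ A)(x) = (det A)² · K₂(h)(A x) and K₃(h ∘ A)(x) = (det A)³ · K₃(h)(A x) when h is C² (resp. C³). -/

import Mathlib

/-- First partial derivative of `h : ℝ² → ℝ` in the `i`-th coordinate direction. -/
noncomputable def pd1 (h : (Fin 2 → ℝ) → ℝ) (i : Fin 2) (x : Fin 2 → ℝ) : ℝ :=
  fderiv ℝ h x (Pi.single i 1)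

/-- Second partial derivative of `h : ℝ² → ℝ`. -/
noncomputable def pd2 (h : (Fin 2 → ℝ) → ℝ) (i j : Fin 2) (x : Fin 2 → ℝ) : ℝ :=
  iteratedFDeriv ℝ 2 h x ![Pi.single i 1, Pi.single j 1]

/-- Third partial derivative of `h : ℝ² → ℝ`. -/
noncomputable def pd3 (h : (Fin 2 → ℝ) → ℝ) (i j m : Fin 2) (x : Fin 2 → ℝ) : ℝ :=
  iteratedFDeriv ℝ 3 h x ![Pi.single i 1, Pi.single j 1, Pi.single m 1]

/-- The rotated gradient `w_h(x) = (h₂(x), −h₁(x))`. -/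
noncomputable def wrot (h : (Fin 2 → ℝ) → ℝ) (x : Fin 2 → ℝ) : Fin 2 → ℝ :=
  ![pd1 h 1 x, -pd1 h 0 x]

/-- `W_l(h)(x) = (1/l!)·D^l h(x)(w_h(x), …, w_h(x))`. -/
noncomputable def Wl (l : ℕ) (h : (Fin 2 → ℝ) → ℝ) (x : Fin 2 → ℝ) : ℝ :=
  (1 / l.factorial : ℝ) * iteratedFDeriv ℝ l h x (fun _ => wrot h x)

/-- `K₂(h) = (1/2)(h₁₁h₂² − 2h₁₂h₁h₂ + h₂₂h₁²)`. -/
noncomputable def K2 (h : (Fin 2 → ℝ) → ℝ) (x : Fin 2 → ℝ) : ℝ :=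
  (1 / 2) * (pd2 h 0 0 x * (pd1 h 1 x) ^ 2 - 2 * pd2 h 0 1 x * pd1 h 0 x * pd1 h 1 x +
    pd2 h 1 1 x * (pd1 h 0 x) ^ 2)

/-- `K₃(h) = (1/6)(h₁₁₁h₂³ − 3h₁₁₂h₂²h₁ + 3h₁₂₂h₂h₁² − h₂₂₂h₁³)`. -/
noncomputable def K3 (h : (Fin 2 → ℝ) → ℝ) (x : Fin 2 → ℝ) : ℝ :=
  (1 / 6) * (pd3 h 0 0 0 x * (pd1 h 1 x) ^ 3 -
    3 * pd3 h 0 0 1 x * (pd1 h 1 x) ^ 2 * pd1 h 0 x +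
    3 * pd3 h 0 1 1 x * pd1 h 1 x * (pd1 h 0 x) ^ 2 -
    pd3 h 1 1 1 x * (pd1 h 0 x) ^ 3)

noncomputable abbrev ee (i : Fin 2) : Fin 2 → ℝ := Pi.single i 1

lemma vdec (v : Fin 2 → ℝ) : v = v 0 • ee 0 + v 1 • ee 1 := by
  funext i; fin_cases i <;> simp

lemma det_eq (A : (Fin 2 → ℝ) →ₗ[ℝ] (Fin 2 → ℝ)) :
    LinearMap.det A = A (ee 0) 0 * A (ee 1) 1 - A (ee 1) 0 * A (ee 0) 1 := by
  rw [← LinearMap.det_toMatrix (Pi.basisFun ℝ (Fin 2)), Matrix.det_fin_two]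
  simp [LinearMap.toMatrix_apply]

lemma comp_eq (h : (Fin 2 → ℝ) → ℝ) (A : (Fin 2 → ℝ) →ₗ[ℝ] (Fin 2 → ℝ)) :
    (fun y => h (A y)) = h ∘ (LinearMap.toContinuousLinearMap A) := by
  funext y; simp

lemma pd1_comp (h : (Fin 2 → ℝ) → ℝ) (A : (Fin 2 → ℝ) →ₗ[ℝ] (Fin 2 → ℝ))
    (x : Fin 2 → ℝ) (hd : DifferentiableAt ℝ h (A x)) (i : Fin 2) :
    pd1 (fun y => h (A y)) i x = A (ee i) 0 * pd1 h 0 (A x) + A (ee i) 1 * pd1 h 1 (A x) := by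
  set A' := LinearMap.toContinuousLinearMap A with hA'
  have hc : ⇑A' = ⇑A := by simp [hA']
  have hfd : fderiv ℝ (fun y => h (A y)) x = (fderiv ℝ h (A x)).comp A' := by
    rw [comp_eq h A]
    have := fderiv_comp x (by rw [hc]; exact hd) A'.differentiableAt
    rw [this, A'.fderiv, hc]
  unfold pd1
  rw [hfd]
  simp only [ContinuousLinearMap.coe_comp', Function.comp_apply, hc]
  conv_lhs => rw [vdec (A (ee i))]
  simp [smul_eq_mul, mul_comm]

lemma wrot_comp (h : (Fin 2 → ℝ) → ℝ) (A : (Fin 2 → ℝ) →ₗ[ℝ] (Fin 2 → ℝ))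
    (x : Fin 2 → ℝ) (hd : DifferentiableAt ℝ h (A x)) :
    A (wrot (fun y => h (A y)) x) = LinearMap.det A • wrot h (A x) := by
  have h0 := pd1_comp h A x hd 0
  have h1 := pd1_comp h A x hd 1
  have hw : wrot (fun y => h (A y)) x
      = (wrot (fun y => h (A y)) x 0) • ee 0 + (wrot (fun y => h (A y)) x 1) • ee 1 :=
    vdec _
  rw [hw, map_add, map_smul, map_smul]
  funext i
  simp only [wrot, Matrix.cons_val_zero, Matrix.cons_val_one, Matrix.head_cons,
    Pi.add_apply, Pi.smul_apply, smul_eq_mul, h0, h1, det_eq A]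
  fin_cases i <;> simp [wrot, Matrix.cons_val_zero, Matrix.cons_val_one] <;> ring

lemma Wl_inv (l : ℕ) (h : (Fin 2 → ℝ) → ℝ) (A : (Fin 2 → ℝ) →ₗ[ℝ] (Fin 2 → ℝ))
    (hh : ContDiff ℝ l h) (x : Fin 2 → ℝ) :
    Wl l (fun y => h (A y)) x = (LinearMap.det A) ^ l * Wl l h (A x) := by
  cases l with
  | zero =>
    simp [Wl, iteratedFDeriv_zero_apply]
  | succ n =>
    have hd : DifferentiableAt ℝ h (A x) := by
      have : (1 : WithTop ℕ∞) ≤ (n + 1 : ℕ) := by exact_mod_cast Nat.succ_le_succ (Nat.zero_le n)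
      exact (hh.differentiable (by exact_mod_cast Nat.succ_ne_zero n)).differentiableAt
    set A' := LinearMap.toContinuousLinearMap A with hA'
    have hc : ⇑A' = ⇑A := by simp [hA']
    have hcomp : (fun y => h (A y)) = h ∘ A' := by funext y; simp [hc]
    unfold Wl
    have key : iteratedFDeriv ℝ (n+1) (fun y => h (A y)) x
        (fun _ => wrot (fun y => h (A y)) x)
        = iteratedFDeriv ℝ (n+1) h (A x) (fun _ => A (wrot (fun y => h (A y)) x)) := by
      conv_lhs => rw [hcomp]
      rw [A'.iteratedFDeriv_comp_right hh x le_rfl]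
      rw [ContinuousMultilinearMap.compContinuousLinearMap_apply]
      simp only [hc]
      rfl
    rw [key, wrot_comp h A x hd]
    rw [show (fun _ : Fin (n+1) => LinearMap.det A • wrot h (A x))
        = (fun i : Fin (n+1) => (fun _ : Fin (n+1) => LinearMap.det A) i •
            (fun _ : Fin (n+1) => wrot h (A x)) i) from rfl]
    rw [ContinuousMultilinearMap.map_smul_univ]
    simp only [Finset.prod_const, Finset.card_univ, Fintype.card_fin, smul_eq_mul]
    ring

lemma bilin_expand (T : (Fin 2 → ℝ) →L[ℝ] ((Fin 2 → ℝ) →L[ℝ] ℝ)) (u v : Fin 2 → ℝ) :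
    T u v = u 0 * v 0 * T (ee 0) (ee 0) + u 0 * v 1 * T (ee 0) (ee 1)
      + u 1 * v 0 * T (ee 1) (ee 0) + u 1 * v 1 * T (ee 1) (ee 1) := by
  conv_lhs => rw [vdec u, vdec v]
  simp only [map_add, map_smul, ContinuousLinearMap.add_apply, ContinuousLinearMap.smul_apply,
    smul_eq_mul]
  ring

lemma Wl2_eq_K2 (h : (Fin 2 → ℝ) → ℝ) (x : Fin 2 → ℝ) (hh : ContDiff ℝ 2 h) :
    Wl 2 h x = K2 h x := by
  have hsym : IsSymmSndFDerivAt ℝ h x :=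
    hh.contDiffAt.isSymmSndFDerivAt (by norm_num)
  have h10 : fderiv ℝ (fderiv ℝ h) x (ee 1) (ee 0) = fderiv ℝ (fderiv ℝ h) x (ee 0) (ee 1) :=
    hsym.eq _ _
  unfold Wl K2 pd2 pd1
  rw [iteratedFDeriv_two_apply, iteratedFDeriv_two_apply, iteratedFDeriv_two_apply,
    iteratedFDeriv_two_apply]
  simp only [Matrix.cons_val_zero, Matrix.cons_val_one, Matrix.head_cons]
  rw [bilin_expand]
  simp only [wrot, pd1, Matrix.cons_val_zero, Matrix.cons_val_one, Matrix.head_cons, h10]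
  show (1 / (Nat.factorial 2 : ℝ)) * _ = _
  norm_num
  ring

lemma three_apply (f : (Fin 2 → ℝ) → ℝ) (x : Fin 2 → ℝ) (m : Fin 3 → (Fin 2 → ℝ)) :
    iteratedFDeriv ℝ 3 f x m
      = fderiv ℝ (fderiv ℝ (fderiv ℝ f)) x (m 0) (m 1) (m 2) := by
  rw [iteratedFDeriv_succ_apply_right, iteratedFDeriv_two_apply]
  rfl

section Sym3
variable {h : (Fin 2 → ℝ) → ℝ} {x : Fin 2 → ℝ}

lemma sym12 (hh : ContDiff ℝ 3 h) (u v w : Fin 2 → ℝ) :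
    fderiv ℝ (fderiv ℝ (fderiv ℝ h)) x u v w
      = fderiv ℝ (fderiv ℝ (fderiv ℝ h)) x v u w := by
  have hG : ContDiffAt ℝ 2 (fderiv ℝ h) x :=
    (hh.fderiv_right (by norm_num)).contDiffAt
  rw [(hG.isSymmSndFDerivAt (by norm_num)).eq u v]

lemma sym23 (hh : ContDiff ℝ 3 h) (u v w : Fin 2 → ℝ) :
    fderiv ℝ (fderiv ℝ (fderiv ℝ h)) x u v w
      = fderiv ℝ (fderiv ℝ (fderiv ℝ h)) x u w v := by
  set Φ : (Fin 2 → ℝ) → ((Fin 2 → ℝ) →L[ℝ] ((Fin 2 → ℝ) →L[ℝ] ℝ)) := fderiv ℝ (fderiv ℝ h)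
    with hΦdef
  have hΦ : DifferentiableAt ℝ Φ x := by
    have : ContDiff ℝ 1 Φ := (hh.fderiv_right (m := 2) (by norm_num)).fderiv_right (by norm_num)
    exact (this.differentiable one_ne_zero).differentiableAt
  have key : ∀ a b : (Fin 2 → ℝ),
      fderiv ℝ (fun y => Φ y a b) x = ((ContinuousLinearMap.apply ℝ ℝ b).comp
        (ContinuousLinearMap.apply ℝ ((Fin 2 → ℝ) →L[ℝ] ℝ) a)).comp (fderiv ℝ Φ x) := by
    intro a b
    set app := (ContinuousLinearMap.apply ℝ ℝ b).comp
        (ContinuousLinearMap.apply ℝ ((Fin 2 → ℝ) →L[ℝ] ℝ) a) with happ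
    have : (fun y => Φ y a b) = app ∘ Φ := rfl
    rw [this, fderiv_comp x app.differentiableAt hΦ]
    simp
  have ev : (fun y => Φ y v w) = (fun y => Φ y w v) := by
    funext y
    exact ((hh.contDiffAt (x := y)).isSymmSndFDerivAt (by norm_num)).eq v w
  have e1 : fderiv ℝ (fderiv ℝ (fderiv ℝ h)) x u v w = fderiv ℝ (fun y => Φ y v w) x u := by
    rw [key v w]; rfl
  have e2 : fderiv ℝ (fderiv ℝ (fderiv ℝ h)) x u w v = fderiv ℝ (fun y => Φ y w v) x u := by
    rw [key w v]; rfl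
  rw [e1, e2, ev]

end Sym3

lemma trilin_expand
    (T : (Fin 2 → ℝ) →L[ℝ] ((Fin 2 → ℝ) →L[ℝ] ((Fin 2 → ℝ) →L[ℝ] ℝ))) (u v w : Fin 2 → ℝ) :
    T u v w
      = u 0 * v 0 * w 0 * T (ee 0) (ee 0) (ee 0) + u 0 * v 0 * w 1 * T (ee 0) (ee 0) (ee 1)
      + u 0 * v 1 * w 0 * T (ee 0) (ee 1) (ee 0) + u 0 * v 1 * w 1 * T (ee 0) (ee 1) (ee 1)
      + u 1 * v 0 * w 0 * T (ee 1) (ee 0) (ee 0) + u 1 * v 0 * w 1 * T (ee 1) (ee 0) (ee 1)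
      + u 1 * v 1 * w 0 * T (ee 1) (ee 1) (ee 0) + u 1 * v 1 * w 1 * T (ee 1) (ee 1) (ee 1) := by
  conv_lhs => rw [vdec u, vdec v, vdec w]
  simp only [map_add, map_smul, ContinuousLinearMap.add_apply, ContinuousLinearMap.smul_apply,
    smul_eq_mul]
  ring

lemma Wl3_eq_K3 (h : (Fin 2 → ℝ) → ℝ) (x : Fin 2 → ℝ) (hh : ContDiff ℝ 3 h) :
    Wl 3 h x = K3 h x := by
  have s001 : fderiv ℝ (fderiv ℝ (fderiv ℝ h)) x (ee 0) (ee 1) (ee 0)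
      = fderiv ℝ (fderiv ℝ (fderiv ℝ h)) x (ee 0) (ee 0) (ee 1) := sym23 hh _ _ _
  have s001' : fderiv ℝ (fderiv ℝ (fderiv ℝ h)) x (ee 1) (ee 0) (ee 0)
      = fderiv ℝ (fderiv ℝ (fderiv ℝ h)) x (ee 0) (ee 0) (ee 1) := by
    rw [sym12 hh, sym23 hh]
  have s011 : fderiv ℝ (fderiv ℝ (fderiv ℝ h)) x (ee 1) (ee 0) (ee 1)
      = fderiv ℝ (fderiv ℝ (fderiv ℝ h)) x (ee 0) (ee 1) (ee 1) := sym12 hh _ _ _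
  have s011' : fderiv ℝ (fderiv ℝ (fderiv ℝ h)) x (ee 1) (ee 1) (ee 0)
      = fderiv ℝ (fderiv ℝ (fderiv ℝ h)) x (ee 0) (ee 1) (ee 1) := by
    rw [sym23 hh, sym12 hh]
  unfold Wl K3 pd3 pd1
  rw [three_apply, three_apply, three_apply, three_apply, three_apply]
  simp only [Matrix.cons_val_zero, Matrix.cons_val_one, Matrix.head_cons,
    Matrix.cons_val_two, Matrix.tail_cons]
  rw [trilin_expand]
  simp only [wrot, pd1, Matrix.cons_val_zero, Matrix.cons_val_one, Matrix.head_cons,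
    s001, s001', s011, s011']
  show (1 / (Nat.factorial 3 : ℝ)) * _ = _
  norm_num [Nat.factorial]
  ring


/-- Relative `GL(2)`-invariance of `W_l`: `W_l(h∘A)(x) = (det A)^l · W_l(h)(Ax)`; in
particular `K₂(h∘A) = (det A)²·K₂(h)∘A` and `K₃(h∘A) = (det A)³·K₃(h)∘A` when `h` is `C²`
(resp. `C³`). -/
theorem Wl_relative_invariance (l : ℕ) (h : (Fin 2 → ℝ) → ℝ)
    (A : (Fin 2 → ℝ) →ₗ[ℝ] (Fin 2 → ℝ)) (hh : ContDiff ℝ l h) (x : Fin 2 → ℝ) :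
    Wl l (fun y => h (A y)) x = (LinearMap.det A) ^ l * Wl l h (A x) ∧
    (ContDiff ℝ 2 h → K2 (fun y => h (A y)) x = (LinearMap.det A) ^ 2 * K2 h (A x)) ∧
    (ContDiff ℝ 3 h → K3 (fun y => h (A y)) x = (LinearMap.det A) ^ 3 * K3 h (A x)) := by
  have hcomp : ∀ n : ℕ, ContDiff ℝ n h → ContDiff ℝ n (fun y => h (A y)) := by
    intro n hn
    exact hn.comp (LinearMap.toContinuousLinearMap A).contDiff
  refine ⟨Wl_inv l h A hh x, fun h2 => ?_, fun h3 => ?_⟩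
  · rw [← Wl2_eq_K2 _ _ (hcomp 2 h2), Wl_inv 2 h A h2 x, Wl2_eq_K2 _ _ h2]
  · rw [← Wl3_eq_K3 _ _ (hcomp 3 h3), Wl_inv 3 h A h3 x, Wl3_eq_K3 _ _ h3]
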